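/- Let (B, L, θ) be a Boolean dynamical system and (α, A) a cycle with no exits. Fix 1 ≤ k < |α| and let α' = α₁⋯α_k. If B ∩ θ_{α'}(B) ≠ ∅ for every non-empty B ⊆ A, then (α', A ∩ θ_{α'}(A)) is a cycle with no exits. -/

import Mathlib

/-- An ideal of a (generalized) Boolean algebra: a non-empty subset closed under
union and under intersection with arbitrary elements. -/
def IsBoolIdeal {B : Type*} [GeneralizedBooleanAlgebra B] (I : Set B) : Prop :=
  I.Nonempty ∧ (∀ a ∈ I, ∀ b ∈ I, a ⊔ b ∈ I) ∧ (∀ a ∈ I, ∀ b : B, a ⊓ b ∈ I)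

/-- A filter in a (generalized) Boolean algebra. -/
def IsBoolFilter {B : Type*} [GeneralizedBooleanAlgebra B] (ξ : Set B) : Prop :=
  ξ.Nonempty ∧ ⊥ ∉ ξ ∧ (∀ a ∈ ξ, ∀ b : B, a ≤ b → b ∈ ξ) ∧ (∀ a ∈ ξ, ∀ b ∈ ξ, a ⊓ b ∈ ξ)

/-- An ultrafilter of a (generalized) Boolean algebra. -/
def IsBoolUltrafilter {B : Type*} [GeneralizedBooleanAlgebra B] (ξ : Set B) : Prop :=
  IsBoolFilter ξ ∧ ∀ a ∈ ξ, ∀ b b' : B, a = b ⊔ b' → b ∈ ξ ∨ b' ∈ ξ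

/-- The relation `A ~ B ⟺ A ∪ A' = B ∪ B'` for some `A', B' ∈ I`. -/
def relI {B : Type*} [GeneralizedBooleanAlgebra B] (I : Set B) (a b : B) : Prop :=
  ∃ a' ∈ I, ∃ b' ∈ I, a ⊔ a' = b ⊔ b'

/-- The action of a finite word `α ∈ L*`: `θ_α = θ_{α_n} ∘ ⋯ ∘ θ_{α_1}`. -/
def wordAct {B L : Type*} (θ : L → B → B) (α : List L) (A : B) : B :=
  α.foldl (fun x a => θ a x) A

/-- `α^k`: the word `α` concatenated with itself `k` times. -/
def wordPow {L : Type*} (α : List L) (k : ℕ) : List L := (List.replicate k α).flatten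

/-- A Boolean dynamical system: a Boolean algebra `B`, a set `L`, and actions
`θ_a` on `B` (Boolean homomorphisms with `θ_a ⊥ = ⊥`) such that each word
action has compact range and closed domain. -/
structure BoolDynSys (B L : Type*) [GeneralizedBooleanAlgebra B] where
  θ : L → B → B
  map_inf : ∀ (a : L) (A A' : B), θ a (A ⊓ A') = θ a A ⊓ θ a A'
  map_sup : ∀ (a : L) (A A' : B), θ a (A ⊔ A') = θ a A ⊔ θ a A'
  map_sdiff : ∀ (a : L) (A A' : B), θ a (A \ A') = θ a A \ θ a A'
  map_bot : ∀ a : L, θ a ⊥ = ⊥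
  compactRange : ∀ α : List L, α ≠ [] → ∃ R : B, IsLUB (Set.range (wordAct θ α)) R
  closedDomain : ∀ α : List L, α ≠ [] → ∀ R : B, IsLUB (Set.range (wordAct θ α)) R →
      ∃ D : B, wordAct θ α D = R

section BDS
variable {B L : Type*} [GeneralizedBooleanAlgebra B]

/-- `Δ_A = {a ∈ L : θ_a(A) ≠ ∅}`. -/
def DeltaSet (S : BoolDynSys B L) (A : B) : Set L := {a : L | S.θ a A ≠ ⊥}

/-- `A` is regular if every non-empty `C ⊆ A` has `0 < |Δ_C| < ∞`. -/
def RegularElt (S : BoolDynSys B L) (A : B) : Prop :=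
  ∀ C : B, C ≤ A → C ≠ ⊥ → (DeltaSet S C).Finite ∧ (DeltaSet S C).Nonempty

/-- An ultrafilter cycle `(α, η)`: `θ_α(A) ∈ η` for all `A ∈ η`. -/
def IsUFCycle (S : BoolDynSys B L) (α : List L) (η : Set B) : Prop :=
  α ≠ [] ∧ IsBoolUltrafilter η ∧ ∀ A ∈ η, wordAct S.θ α A ∈ η

/-- A cycle `(α, A)`: `θ_α(C) = C` for all `C ⊆ A`. -/
def IsCycle (S : BoolDynSys B L) (α : List L) (A : B) : Prop :=
  α ≠ [] ∧ A ≠ ⊥ ∧ ∀ C : B, C ≤ A → wordAct S.θ α C = C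

/-- The cycle `(α, A)` has no exits: for all `t ≤ |α|` and all non-empty
`C ⊆ θ_{α₁⋯α_t}(A)`, `C` is regular with `Δ_C = {α_{t+1}}` (indices mod `|α|`). -/
def NoExits (S : BoolDynSys B L) (α : List L) (A : B) : Prop :=
  ∀ t : ℕ, ∀ _h1 : 1 ≤ t, ∀ h2 : t ≤ α.length, ∀ C : B, C ≠ ⊥ →
    C ≤ wordAct S.θ (α.take t) A →
    RegularElt S C ∧
      DeltaSet S C = {α.get ⟨t % α.length, Nat.mod_lt t (Nat.lt_of_lt_of_le _h1 h2)⟩}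

/-- The cycle `(α, A)` has an exit. -/
def HasExit (S : BoolDynSys B L) (α : List L) (A : B) : Prop :=
  ∃ t : ℕ, ∃ _h1 : 1 ≤ t, ∃ h2 : t ≤ α.length, ∃ C : B, C ≠ ⊥ ∧
    C ≤ wordAct S.θ (α.take t) A ∧
    DeltaSet S C ≠ {α.get ⟨t % α.length, Nat.mod_lt t (Nat.lt_of_lt_of_le _h1 h2)⟩}

/-- Condition (L): every cycle has an exit. -/
def ConditionL (S : BoolDynSys B L) : Prop :=
  ∀ (α : List L) (A : B), IsCycle S α A → HasExit S α A

/-- A hereditary subset: closed under the actions. -/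
def IsHereditary (S : BoolDynSys B L) (H : Set B) : Prop :=
  ∀ A ∈ H, ∀ a : L, S.θ a A ∈ H

/-- A saturated subset: `A ∈ H` whenever `A` is regular and `θ_a(A) ∈ H` for all `a`. -/
def IsSaturated (S : BoolDynSys B L) (H : Set B) : Prop :=
  ∀ A : B, RegularElt S A → (∀ a : L, S.θ a A ∈ H) → A ∈ H

/-- A maximal tail: conditions (T0)–(T5). -/
def IsMaximalTail (S : BoolDynSys B L) (T : Set B) : Prop :=
  T.Nonempty ∧
  (⊥ ∉ T) ∧
  (∀ A : B, ∀ a : L, S.θ a A ∈ T → A ∈ T) ∧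
  (∀ A C : B, A ⊔ C ∈ T → A ∈ T ∨ C ∈ T) ∧
  (∀ A ∈ T, ∀ C : B, A ≤ C → C ∈ T) ∧
  (∀ A ∈ T, RegularElt S A → ∃ a : L, S.θ a A ∈ T) ∧
  (∀ A₁ ∈ T, ∀ A₂ ∈ T, ∃ C ∈ T,
      (∃ α : List L, C ≤ wordAct S.θ α A₁) ∧ (∃ β : List L, C ≤ wordAct S.θ β A₂))

/-- A cyclic maximal tail. -/
def IsCyclicMaximalTail (S : BoolDynSys B L) (T : Set B) : Prop :=
  IsMaximalTail S T ∧
  ∃ (α : List L) (η : Set B) (A : B), IsUFCycle S α η ∧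
    T = {C : B | ∃ β : List L, wordAct S.θ β C ∈ η} ∧ A ∈ η ∧
    ∀ β : List L, β ≠ [] → ∀ C : B, C ≤ A → wordAct S.θ β C ∈ η →
      C ∈ η ∧ ∃ k : ℕ, 0 < k ∧ β = wordPow α k

/-- Condition (K). -/
def ConditionK (S : BoolDynSys B L) : Prop :=
  ¬ ∃ (α : List L) (η : Set B) (A : B), IsUFCycle S α η ∧ A ∈ η ∧
    ∀ β : List L, β ≠ [] → ∀ C : B, C ≤ A → wordAct S.θ β C ∈ η →
      C ∈ η ∧ ∃ k : ℕ, 0 < k ∧ β = wordPow α k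

/-! Notions for the quotient Boolean dynamical system `(B/H, L, θ)` (for a
hereditary saturated ideal `H`), expressed in terms of representatives in `B`. -/

/-- `[C] ⊆ [B']` in `B/H`. -/
def qle (H : Set B) (C A : B) : Prop := ∃ W ∈ H, C ≤ A ⊔ W

/-- `Δ_{[C]}` in `B/H`. -/
def QDelta (S : BoolDynSys B L) (H : Set B) (C : B) : Set L := {a : L | S.θ a C ∉ H}

/-- `[A]` is regular in `B/H`. -/
def QRegular (S : BoolDynSys B L) (H : Set B) (A : B) : Prop :=
  ∀ C : B, C ∉ H → qle H C A → (QDelta S H C).Finite ∧ (QDelta S H C).Nonempty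

/-- `(α, [A])` is a cycle in the quotient `(B/H, L, θ)`. -/
def QCycle (S : BoolDynSys B L) (H : Set B) (α : List L) (A : B) : Prop :=
  α ≠ [] ∧ A ∉ H ∧ ∀ C : B, qle H C A → relI H (wordAct S.θ α C) C

/-- The cycle `(α, [A])` has an exit in the quotient `(B/H, L, θ)`. -/
def QHasExit (S : BoolDynSys B L) (H : Set B) (α : List L) (A : B) : Prop :=
  ∃ t : ℕ, ∃ _h1 : 1 ≤ t, ∃ h2 : t ≤ α.length, ∃ C : B, C ∉ H ∧
    qle H C (wordAct S.θ (α.take t) A) ∧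
    QDelta S H C ≠ {α.get ⟨t % α.length, Nat.mod_lt t (Nat.lt_of_lt_of_le _h1 h2)⟩}

/-- The quotient `(B/H, L, θ)` satisfies Condition (L). -/
def QConditionL (S : BoolDynSys B L) (H : Set B) : Prop :=
  ∀ (α : List L) (A : B), QCycle S H α A → QHasExit S H α A

end BDS

section SubCycleAux
variable {B L : Type*} [GeneralizedBooleanAlgebra B]

lemma wordAct_append (θ : L → B → B) (l₁ l₂ : List L) (A : B) :
    wordAct θ (l₁ ++ l₂) A = wordAct θ l₂ (wordAct θ l₁ A) :=
  List.foldl_append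

lemma wordAct_cons (θ : L → B → B) (a : L) (l : List L) (A : B) :
    wordAct θ (a :: l) A = wordAct θ l (θ a A) := rfl

lemma wordAct_sdiff (S : BoolDynSys B L) (l : List L) (X Y : B) :
    wordAct S.θ l (X \ Y) = wordAct S.θ l X \ wordAct S.θ l Y := by
  induction l generalizing X Y with
  | nil => rfl
  | cons a l ih => rw [wordAct_cons, S.map_sdiff, ih, wordAct_cons, wordAct_cons]

lemma wordAct_bot (S : BoolDynSys B L) (l : List L) : wordAct S.θ l ⊥ = ⊥ := by
  induction l with
  | nil => rfl
  | cons a l ih => rw [wordAct_cons, S.map_bot, ih]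

lemma wordAct_mono (S : BoolDynSys B L) (l : List L) {X Y : B} (h : X ≤ Y) :
    wordAct S.θ l X ≤ wordAct S.θ l Y := by
  rw [← sdiff_eq_bot_iff] at h ⊢
  rw [← wordAct_sdiff, h, wordAct_bot]

end SubCycleAux

/-- Let `(α, A)` be a cycle with no exits, `1 ≤ k < |α|`, and `α' = α₁⋯α_k`.
If `C ⊓ θ_{α'}(C) ≠ ∅` for every non-empty `C ⊆ A`, then
`(α', A ⊓ θ_{α'}(A))` is a cycle with no exits. -/
theorem sub_cycle {B L : Type*} [GeneralizedBooleanAlgebra B]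
    (S : BoolDynSys B L) (α : List L) (A : B)
    (hc : IsCycle S α A) (hne : NoExits S α A)
    (k : ℕ) (hk1 : 1 ≤ k) (hk2 : k < α.length)
    (hmeet : ∀ C : B, C ≠ ⊥ → C ≤ A → C ⊓ wordAct S.θ (α.take k) C ≠ ⊥) :
    IsCycle S (α.take k) (A ⊓ wordAct S.θ (α.take k) A) ∧
      NoExits S (α.take k) (A ⊓ wordAct S.θ (α.take k) A) := by
  obtain ⟨hαne, hAne, hfix⟩ := hc
  have hlenpos : 0 < α.length := lt_of_le_of_lt (Nat.zero_le k) hk2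
  have hAfix : wordAct S.θ α A = A := hfix A le_rfl
  have hgf : ∀ C : B, C ≤ A →
      wordAct S.θ (α.drop k) (wordAct S.θ (α.take k) C) = C := by
    intro C hC
    rw [← wordAct_append, List.take_append_drop]
    exact hfix C hC
  have level_succ : ∀ t, (ht : t < α.length) →
      wordAct S.θ (α.take (t+1)) A = S.θ α[t] (wordAct S.θ (α.take t) A) := by
    intro t ht
    rw [List.take_succ, List.getElem?_eq_getElem ht, Option.toList_some,
      wordAct_append]
    rfl
  have hne' : ∀ t, ∀ ht1 : 1 ≤ t, ∀ ht2 : t ≤ α.length, ∀ C : B, C ≠ ⊥ →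
      C ≤ wordAct S.θ (α.take t) A →
      S.θ (α.get ⟨t % α.length, Nat.mod_lt t (Nat.lt_of_lt_of_le ht1 ht2)⟩) C ≠ ⊥ := by
    intro t ht1 ht2 C hC hle
    have h := (hne t ht1 ht2 C hC hle).2
    have : α.get ⟨t % α.length, Nat.mod_lt t (Nat.lt_of_lt_of_le ht1 ht2)⟩ ∈
        DeltaSet S C := by rw [h]; rfl
    exact this
  have letter_nv : ∀ t, (ht : t < α.length) → ∀ C : B, C ≠ ⊥ →
      C ≤ wordAct S.θ (α.take t) A → S.θ α[t] C ≠ ⊥ := by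
    intro t ht C hC hle
    rcases Nat.eq_zero_or_pos t with h0 | hpos
    · subst h0
      have hle' : C ≤ wordAct S.θ (α.take α.length) A := by
        rw [List.take_length, hAfix]; exact hle
      have := hne' α.length hlenpos le_rfl C hC hle'
      simpa [List.get_eq_getElem, Nat.mod_self] using this
    · have := hne' t hpos ht.le C hC hle
      simpa [List.get_eq_getElem, Nat.mod_eq_of_lt ht] using this
  have tail_nv : ∀ n t, t + n = α.length → ∀ C : B, C ≠ ⊥ →
      C ≤ wordAct S.θ (α.take t) A → wordAct S.θ (α.drop t) C ≠ ⊥ := by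
    intro n
    induction n with
    | zero =>
      intro t htn C hC hle
      have : t = α.length := by omega
      subst this
      rw [List.drop_length]
      exact hC
    | succ n ih =>
      intro t htn C hC hle
      have ht : t < α.length := by omega
      rw [List.drop_eq_getElem_cons ht, wordAct_cons]
      refine ih (t+1) (by omega) _ (letter_nv t ht C hC hle) ?_
      rw [level_succ t ht]
      exact wordAct_mono S [α[t]] hle
  have g_nv : ∀ C : B, C ≠ ⊥ → C ≤ wordAct S.θ (α.take k) A →
      wordAct S.θ (α.drop k) C ≠ ⊥ :=
    fun C hC hle => tail_nv (α.length - k) k (by omega) C hC hle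
  have inj_le : ∀ X Y : B, X ≤ wordAct S.θ (α.take k) A →
      wordAct S.θ (α.drop k) X = wordAct S.θ (α.drop k) Y → X ≤ Y := by
    intro X Y hX hxy
    rw [← sdiff_eq_bot_iff]
    by_contra h
    exact g_nv _ h (sdiff_le.trans hX)
      (by rw [wordAct_sdiff, hxy, sdiff_self])
  have inj : ∀ X Y : B, X ≤ wordAct S.θ (α.take k) A →
      Y ≤ wordAct S.θ (α.take k) A →
      wordAct S.θ (α.drop k) X = wordAct S.θ (α.drop k) Y → X = Y := by
    intro X Y hX hY hxy
    exact le_antisymm (inj_le X Y hX hxy) (inj_le Y X hY hxy.symm)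
  have hgA : wordAct S.θ (α.drop k) (wordAct S.θ (α.take k) A) = A :=
    hgf A le_rfl
  have hgle : ∀ D : B, D ≤ wordAct S.θ (α.take k) A →
      wordAct S.θ (α.drop k) D ≤ A := by
    intro D hD
    have := wordAct_mono S (α.drop k) hD
    rwa [hgA] at this
  have hfg : ∀ D : B, D ≤ wordAct S.θ (α.take k) A →
      wordAct S.θ (α.take k) (wordAct S.θ (α.drop k) D) = D := by
    intro D hD
    exact inj _ _ (wordAct_mono S (α.take k) (hgle D hD)) hD (hgf _ (hgle D hD))
  have hfixA' : ∀ C : B, C ≤ A ⊓ wordAct S.θ (α.take k) A →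
      wordAct S.θ (α.take k) C = C := by
    intro C hC
    have hCA : C ≤ A := hC.trans inf_le_left
    have hCfA : C ≤ wordAct S.θ (α.take k) A := hC.trans inf_le_right
    have hfgC : wordAct S.θ (α.take k) (wordAct S.θ (α.drop k) C) = C :=
      hfg C hCfA
    have hgCA : wordAct S.θ (α.drop k) C ≤ A := hgle C hCfA
    have h1 : C ≤ wordAct S.θ (α.drop k) C := by
      rw [← sdiff_eq_bot_iff]
      by_contra hE
      apply hmeet (C \ wordAct S.θ (α.drop k) C) hE (sdiff_le.trans hCA)
      rw [wordAct_sdiff, hfgC]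
      refine bot_unique ?_
      calc (C \ wordAct S.θ (α.drop k) C) ⊓
            (wordAct S.θ (α.take k) C \ C)
          ≤ C ⊓ (wordAct S.θ (α.take k) C \ C) := inf_le_inf_right _ sdiff_le
        _ = ⊥ := inf_sdiff_self_right
    have h2 : wordAct S.θ (α.drop k) C ≤ C := by
      rw [← sdiff_eq_bot_iff]
      by_contra hE
      apply hmeet (wordAct S.θ (α.drop k) C \ C) hE (sdiff_le.trans hgCA)
      rw [wordAct_sdiff, hfgC]
      refine bot_unique ?_
      calc (wordAct S.θ (α.drop k) C \ C) ⊓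
            (C \ wordAct S.θ (α.take k) C)
          ≤ (wordAct S.θ (α.drop k) C \ C) ⊓ C := inf_le_inf_left _ sdiff_le
        _ = ⊥ := inf_sdiff_self_left
    have hgCC : wordAct S.θ (α.drop k) C = C := le_antisymm h2 h1
    have := hfgC
    rwa [hgCC] at this
  have htklen : (α.take k).length = k := by
    rw [List.length_take]; omega
  have htkne : α.take k ≠ [] := by
    intro h
    rw [h] at htklen
    simp at htklen
    omega
  refine ⟨⟨htkne, hmeet A hAne le_rfl, hfixA'⟩, ?_⟩
  intro t ht1 ht2 C hC hle
  rw [htklen] at ht2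
  have htake : (α.take k).take t = α.take t := by
    rw [List.take_take]; congr 1; omega
  rw [htake] at hle
  rcases lt_or_eq_of_le ht2 with htk | htk
  · -- t < k
    have hle' : C ≤ wordAct S.θ (α.take t) A :=
      hle.trans (wordAct_mono S (α.take t) inf_le_left)
    obtain ⟨hreg, hΔ⟩ := hne t ht1 (le_of_lt (htk.trans hk2)) C hC hle'
    refine ⟨hreg, ?_⟩
    rw [hΔ]
    have e1 : t % α.length = t := Nat.mod_eq_of_lt (htk.trans hk2)
    have e2 : t % (α.take k).length = t := by
      rw [htklen]; exact Nat.mod_eq_of_lt htk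
    congr 1
    simp only [List.get_eq_getElem, e1, e2, List.getElem_take]
  · -- t = k
    subst htk
    have hle2 : C ≤ A ⊓ wordAct S.θ (α.take t) A := by
      have := hfixA' (A ⊓ wordAct S.θ (α.take t) A) le_rfl
      rwa [this] at hle
    have hle' : C ≤ wordAct S.θ (α.take α.length) A := by
      rw [List.take_length, hAfix]
      exact hle2.trans inf_le_left
    obtain ⟨hreg, hΔ⟩ := hne α.length hlenpos le_rfl C hC hle'
    refine ⟨hreg, ?_⟩
    rw [hΔ]
    have h0 : t % (α.take t).length = 0 := by rw [htklen]; exact Nat.mod_self t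
    congr 1
    simp only [List.get_eq_getElem, Nat.mod_self, h0, List.getElem_take]
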